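/- arXiv:1704.00367 — 2 statements merged into one kernel-verified Lean document; each statement's English description precedes it below -/
import Mathlib

section
/- Let M = L* + S* + N* where L, S*, N*, and an estimate L are n × n matrices, and suppose ‖L* − L‖∞ ≤ β. Set ζ = β + ‖N*‖∞ and S = P_ζ(M − L). Then supp(S) ⊆ supp(S*) and ‖S* − S‖∞ ≤ 2(β + ‖N*‖∞). -/
open Matrix

noncomputable def specNorm {m n : Type*} [Fintype m] [Fintype n] [DecidableEq n]
    (A : Matrix m n ℝ) : ℝ :=
  ‖LinearMap.toContinuousLinearMap (Matrix.toEuclideanLin A)‖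

noncomputable def infNorm {m n : Type*} [Fintype m] [Fintype n] (A : Matrix m n ℝ) : ℝ :=
  ⨆ i, ⨆ j, |A i j|

noncomputable def nnzRow {m n : Type*} [Fintype n] (A : Matrix m n ℝ) (i : m) : ℕ :=
  (Finset.univ.filter fun j => A i j ≠ 0).card

noncomputable def nnzCol {m n : Type*} [Fintype m] (A : Matrix m n ℝ) (j : n) : ℕ :=
  (Finset.univ.filter fun i => A i j ≠ 0).card

noncomputable def hardThresh {m n : Type*} (a : ℝ) (A : Matrix m n ℝ) : Matrix m n ℝ :=
  Matrix.of fun i j => if a < |A i j| then A i j else 0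

noncomputable def sigmaMin {d n : Type*} [Fintype d] [Fintype n] [DecidableEq d]
    (F : Matrix d n ℝ) : ℝ :=
  sInf ((fun y : EuclideanSpace ℝ d => ‖Matrix.toEuclideanLin Fᵀ y‖) '' {y | ‖y‖ = 1})

noncomputable def pinv {d n : Type*} [Fintype d] [Fintype n] [DecidableEq d]
    (F : Matrix d n ℝ) : Matrix n d ℝ :=
  Fᵀ * (F * Fᵀ)⁻¹

def IsTruncatedEigen {d : ℕ} (r : ℕ) (A B : Matrix (Fin d) (Fin d) ℝ) : Prop :=
  ∃ (Q : Matrix (Fin d) (Fin r) ℝ) (Λ : Fin r → ℝ)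
    (Qp : Matrix (Fin d) (Fin (d - r)) ℝ) (Λp : Fin (d - r) → ℝ),
    Qᵀ * Q = 1 ∧ Qpᵀ * Qp = 1 ∧ Qᵀ * Qp = 0 ∧
    A = Q * Matrix.diagonal Λ * Qᵀ + Qp * Matrix.diagonal Λp * Qpᵀ ∧
    B = Q * Matrix.diagonal Λ * Qᵀ ∧
    ∀ i j, |Λp j| ≤ |Λ i|

def symEmb {n₁ n₂ : Type*} (M : Matrix n₁ n₂ ℝ) : Matrix (n₁ ⊕ n₂) (n₁ ⊕ n₂) ℝ :=
  Matrix.fromBlocks 0 M Mᵀ 0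


lemma abs_le_infNorm {m n : Type*} [Fintype m] [Fintype n] (A : Matrix m n ℝ) (i : m) (j : n) :
    |A i j| ≤ infNorm A := by
  have h1 : |A i j| ≤ ⨆ j, |A i j| :=
    le_ciSup (f := fun j => |A i j|) (Set.Finite.bddAbove (Set.finite_range _)) j
  exact h1.trans (le_ciSup (f := fun i => ⨆ j, |A i j|) (Set.Finite.bddAbove (Set.finite_range _)) i)

lemma infNorm_le {m n : Type*} [Fintype m] [Fintype n] [Nonempty m] [Nonempty n]
    (A : Matrix m n ℝ) (c : ℝ) (h : ∀ i j, |A i j| ≤ c) : infNorm A ≤ c :=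
  ciSup_le fun i => ciSup_le fun j => h i j

theorem stmt7 {n : ℕ} (M Lstar Sstar Nstar L : Matrix (Fin n) (Fin n) ℝ) (β : ℝ)
    (hβ : 0 < β) (hM : M = Lstar + Sstar + Nstar) (herr : infNorm (Lstar - L) ≤ β) :
    (∀ i j, Sstar i j = 0 → hardThresh (β + infNorm Nstar) (M - L) i j = 0) ∧
      infNorm (Sstar - hardThresh (β + infNorm Nstar) (M - L)) ≤
        2 * (β + infNorm Nstar) := by
  set ζ := β + infNorm Nstar with hζ
  have key : ∀ i j, |(M - L) i j - Sstar i j| ≤ ζ := by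
    intro i j
    have h1 : |(Lstar - L) i j| ≤ β := (abs_le_infNorm _ i j).trans herr
    have h2 : |Nstar i j| ≤ infNorm Nstar := abs_le_infNorm _ i j
    have : (M - L) i j - Sstar i j = (Lstar - L) i j + Nstar i j := by
      simp [hM, Matrix.sub_apply, Matrix.add_apply]; ring
    rw [this]
    exact (abs_add_le _ _).trans (add_le_add h1 h2)
  simp only [Matrix.sub_apply] at key
  constructor
  · intro i j hS
    have := key i j
    rw [hS, sub_zero] at this
    simp only [hardThresh, Matrix.of_apply, Matrix.sub_apply, ite_eq_right_iff]
    exact if_neg (not_lt.mpr this)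
  · rcases Nat.eq_zero_or_pos n with hn | hn
    · subst hn
      have h0 : infNorm (Sstar - hardThresh ζ (M - L)) = 0 := by
        simp [infNorm, Real.iSup_of_isEmpty]
      have h0' : infNorm Nstar = 0 := by
        simp [infNorm, Real.iSup_of_isEmpty]
      rw [h0, hζ, h0']
      linarith
    · have : Nonempty (Fin n) := ⟨⟨0, hn⟩⟩
      have hζ0 : 0 ≤ ζ := by
        have : (0:ℝ) ≤ infNorm Nstar :=
          (abs_nonneg _).trans (abs_le_infNorm Nstar (Classical.arbitrary _) (Classical.arbitrary _))
        linarith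
      apply infNorm_le
      intro i j
      have hk := key i j
      by_cases h : ζ < |M i j - L i j|
      · have hT : hardThresh ζ (M - L) i j = M i j - L i j := by
          simp only [hardThresh, Matrix.of_apply, Matrix.sub_apply]
          exact if_pos h
        rw [Matrix.sub_apply, hT]
        have : |Sstar i j - (M i j - L i j)| ≤ ζ := by rw [abs_sub_comm]; exact key i j
        linarith
      · have hT : hardThresh ζ (M - L) i j = 0 := by
          simp only [hardThresh, Matrix.of_apply, Matrix.sub_apply]
          exact if_neg h
        rw [Matrix.sub_apply, hT, sub_zero]
        have h2 : |Sstar i j - (M i j - L i j)| ≤ ζ := by rw [abs_sub_comm]; exact key i j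
        have h3 := abs_sub_abs_le_abs_sub (Sstar i j) (M i j - L i j)
        linarith [not_lt.mp h]
end

section
/- Let F be a d × n matrix of full row rank with smallest singular value σ_min(F) and largest singular value σ_max(F), let W* be a symmetric d × d matrix of rank at most r, and let E be an n × n matrix with at most z nonzeros per row and per column. Let G = F† be the pseudoinverse and W = P_r(Gᵀ(FᵀW*F + E)G). Then ‖W* − W‖₂ ≤ 2z‖E‖∞ / σ_min(F)². -/
open Matrix

namespace Stmt12Aux

open Matrix
open scoped Matrix.Norms.L2Operator RealInnerProductSpace

lemma specNorm_eq_l2 {m n : Type*} [Fintype m] [Fintype n] [DecidableEq n]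
    (A : Matrix m n ℝ) : specNorm A = ‖A‖ := rfl

lemma le_of_sq {a b : ℝ} (ha : 0 ≤ a) (hb : 0 ≤ b) (h : a ^ 2 ≤ b ^ 2) : a ≤ b := by
  nlinarith

lemma norm_le_of_sq_le_mul {a b c : ℝ} (ha : 0 ≤ a) (hbc : 0 ≤ b * c)
    (h : a ^ 2 ≤ b * c * a) : a ≤ b * c := by
  rcases eq_or_lt_of_le ha with h0 | h0
  · rw [← h0]; exact hbc
  · nlinarith

lemma euc_normsq {k : ℕ} (x : EuclideanSpace ℝ (Fin k)) : ‖x‖ ^ 2 = ∑ i, x i ^ 2 := by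
  rw [EuclideanSpace.norm_eq, Real.sq_sqrt (by positivity)]
  simp [sq_abs]

lemma euc_symm_normsq {k : ℕ} (v : Fin k → ℝ) :
    ‖(WithLp.equiv 2 (Fin k → ℝ)).symm v‖ ^ 2 = v ⬝ᵥ v := by
  rw [euc_normsq]
  simp [dotProduct, sq]

lemma toEucLin_apply' {m k : ℕ} (A : Matrix (Fin m) (Fin k) ℝ) (x : EuclideanSpace ℝ (Fin k))
    (i : Fin m) : Matrix.toEuclideanLin A x i = ∑ j, A i j * x j := by
  rw [Matrix.toEuclideanLin_apply]
  simp [Matrix.mulVec, dotProduct]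

lemma toEucLin_mul {m l k : ℕ} (A : Matrix (Fin m) (Fin l) ℝ) (B : Matrix (Fin l) (Fin k) ℝ)
    (x : EuclideanSpace ℝ (Fin k)) :
    Matrix.toEuclideanLin (A * B) x
      = Matrix.toEuclideanLin A (Matrix.toEuclideanLin B x) := by
  simp only [Matrix.toEuclideanLin_apply, Equiv.apply_symm_apply, Matrix.mulVec_mulVec]

lemma toEucLin_one {k : ℕ} (x : EuclideanSpace ℝ (Fin k)) :
    Matrix.toEuclideanLin (1 : Matrix (Fin k) (Fin k) ℝ) x = x := by
  rw [Matrix.toEuclideanLin_apply]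
  simp

lemma toEucLin_symm {m k : ℕ} (A : Matrix (Fin m) (Fin k) ℝ) (v : Fin k → ℝ) :
    Matrix.toEuclideanLin A ((WithLp.equiv 2 (Fin k → ℝ)).symm v)
      = (WithLp.equiv 2 (Fin m → ℝ)).symm (A *ᵥ v) := by
  rw [Matrix.toEuclideanLin_apply]
  rfl

lemma opnorm_le {m k : ℕ} (A : Matrix (Fin m) (Fin k) ℝ) {c : ℝ} (hc : 0 ≤ c)
    (h : ∀ x : EuclideanSpace ℝ (Fin k), ‖Matrix.toEuclideanLin A x‖ ≤ c * ‖x‖) :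
    ‖A‖ ≤ c := by
  rw [Matrix.l2_opNorm_def]
  exact ContinuousLinearMap.opNorm_le_bound _ hc h

lemma le_opnorm {m k : ℕ} (A : Matrix (Fin m) (Fin k) ℝ) (x : EuclideanSpace ℝ (Fin k)) :
    ‖Matrix.toEuclideanLin A x‖ ≤ ‖A‖ * ‖x‖ := by
  exact Matrix.toEuclideanLin (n := Fin k) (m := Fin m) (𝕜 := ℝ)
    |>.trans LinearMap.toContinuousLinearMap A |>.le_opNorm x

lemma transpose_inner {d n : ℕ} (A : Matrix (Fin d) (Fin n) ℝ) (y : EuclideanSpace ℝ (Fin d))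
    (x : EuclideanSpace ℝ (Fin n)) :
    ⟪Matrix.toEuclideanLin Aᵀ y, x⟫ = ⟪y, Matrix.toEuclideanLin A x⟫ := by
  have h : (Aᵀ : Matrix (Fin n) (Fin d) ℝ) = Aᴴ := by ext i j; simp
  rw [h, Matrix.toEuclideanLin_conjTranspose_eq_adjoint, LinearMap.adjoint_inner_left]

lemma infNorm_nonneg {m n : Type*} [Fintype m] [Fintype n] (A : Matrix m n ℝ) :
    0 ≤ infNorm A :=
  Real.iSup_nonneg fun _ => Real.iSup_nonneg fun _ => abs_nonneg _

lemma abs_le_infNorm {m n : Type*} [Fintype m] [Fintype n] (A : Matrix m n ℝ) (i : m) (j : n) :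
    |A i j| ≤ infNorm A := by
  have h1 : |A i j| ≤ ⨆ j', |A i j'| :=
    le_ciSup (f := fun j' => |A i j'|) (Set.Finite.bddAbove (Set.finite_range _)) j
  have h2 : (⨆ j', |A i j'|) ≤ infNorm A :=
    le_ciSup (f := fun i' => ⨆ j', |A i' j'|) (Set.Finite.bddAbove (Set.finite_range _)) i
  exact h1.trans h2

end Stmt12Aux
namespace Stmt12Aux
open Matrix
open scoped Matrix.Norms.L2Operator RealInnerProductSpace

lemma rowsum_le {k z : ℕ} (E : Matrix (Fin k) (Fin k) ℝ) (i : Fin k)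
    (h : nnzRow E i ≤ z) : ∑ j, |E i j| ≤ (z : ℝ) * infNorm E := by
  classical
  have h1 : ∑ j, |E i j| = ∑ j ∈ Finset.univ.filter (fun j => E i j ≠ 0), |E i j| := by
    refine (Finset.sum_subset (Finset.filter_subset _ _) ?_).symm
    intro j _ hj
    simp only [Finset.mem_filter, Finset.mem_univ, true_and, not_not] at hj
    simp [hj]
  rw [h1]
  calc ∑ j ∈ Finset.univ.filter (fun j => E i j ≠ 0), |E i j|
      ≤ (Finset.univ.filter (fun j => E i j ≠ 0)).card • infNorm E :=
        Finset.sum_le_card_nsmul _ _ _ (fun j _ => abs_le_infNorm E i j)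
    _ = ((nnzRow E i : ℝ)) * infNorm E := by rw [nsmul_eq_mul]; rfl
    _ ≤ (z : ℝ) * infNorm E := by
        apply mul_le_mul_of_nonneg_right _ (infNorm_nonneg E)
        exact_mod_cast h

lemma colsum_le {k z : ℕ} (E : Matrix (Fin k) (Fin k) ℝ) (j : Fin k)
    (h : nnzCol E j ≤ z) : ∑ i, |E i j| ≤ (z : ℝ) * infNorm E := by
  classical
  have h1 : ∑ i, |E i j| = ∑ i ∈ Finset.univ.filter (fun i => E i j ≠ 0), |E i j| := by
    refine (Finset.sum_subset (Finset.filter_subset _ _) ?_).symm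
    intro i _ hi
    simp only [Finset.mem_filter, Finset.mem_univ, true_and, not_not] at hi
    simp [hi]
  rw [h1]
  calc ∑ i ∈ Finset.univ.filter (fun i => E i j ≠ 0), |E i j|
      ≤ (Finset.univ.filter (fun i => E i j ≠ 0)).card • infNorm E :=
        Finset.sum_le_card_nsmul _ _ _ (fun i _ => abs_le_infNorm E i j)
    _ = ((nnzCol E j : ℝ)) * infNorm E := by rw [nsmul_eq_mul]; rfl
    _ ≤ (z : ℝ) * infNorm E := by
        apply mul_le_mul_of_nonneg_right _ (infNorm_nonneg E)
        exact_mod_cast h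

lemma specNorm_sparse {k z : ℕ} (E : Matrix (Fin k) (Fin k) ℝ)
    (hrow : ∀ i, nnzRow E i ≤ z) (hcol : ∀ j, nnzCol E j ≤ z) :
    ‖E‖ ≤ (z : ℝ) * infNorm E := by
  set c : ℝ := (z : ℝ) * infNorm E with hc
  have hc0 : 0 ≤ c := mul_nonneg (Nat.cast_nonneg z) (infNorm_nonneg E)
  refine opnorm_le E hc0 fun x => ?_
  refine le_of_sq (norm_nonneg _) (by positivity) ?_
  rw [euc_normsq, mul_pow, euc_normsq]
  have key : ∀ i, (Matrix.toEuclideanLin E x i) ^ 2 ≤ c * ∑ j, |E i j| * (x j) ^ 2 := by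
    intro i
    rw [toEucLin_apply']
    have h2 : (∑ j, E i j * x j) ^ 2 ≤ (∑ j, |E i j| * |x j|) ^ 2 := by
      refine sq_le_sq' ?_ ?_
      · refine neg_le_of_neg_le ?_
        refine le_trans (neg_le_abs _) ?_
        refine le_trans (Finset.abs_sum_le_sum_abs _ _) ?_
        exact le_of_eq (by simp [abs_mul])
      · refine le_trans (le_abs_self _) ?_
        refine le_trans (Finset.abs_sum_le_sum_abs _ _) ?_
        exact le_of_eq (by simp [abs_mul])
    refine h2.trans ?_
    have h3 : (∑ j, |E i j| * |x j|) ^ 2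
        ≤ (∑ j, |E i j|) * ∑ j, |E i j| * (x j) ^ 2 := by
      have := Finset.sum_mul_sq_le_sq_mul_sq Finset.univ
        (fun j => Real.sqrt |E i j|) (fun j => Real.sqrt |E i j| * |x j|)
      calc (∑ j, |E i j| * |x j|) ^ 2
          = (∑ j, Real.sqrt |E i j| * (Real.sqrt |E i j| * |x j|)) ^ 2 := by
            congr 1; refine Finset.sum_congr rfl fun j _ => ?_
            rw [← mul_assoc, Real.mul_self_sqrt (abs_nonneg _)]
        _ ≤ (∑ j, Real.sqrt |E i j| ^ 2) * ∑ j, (Real.sqrt |E i j| * |x j|) ^ 2 := this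
        _ = (∑ j, |E i j|) * ∑ j, |E i j| * (x j) ^ 2 := by
            congr 1
            · exact Finset.sum_congr rfl fun j _ => Real.sq_sqrt (abs_nonneg _)
            · refine Finset.sum_congr rfl fun j _ => ?_
              rw [mul_pow, Real.sq_sqrt (abs_nonneg _), sq_abs]
    refine h3.trans ?_
    refine mul_le_mul_of_nonneg_right (rowsum_le E i (hrow i)) ?_
    exact Finset.sum_nonneg fun j _ => mul_nonneg (abs_nonneg _) (sq_nonneg _)
  calc ∑ i, (Matrix.toEuclideanLin E x i) ^ 2
      ≤ ∑ i, c * ∑ j, |E i j| * (x j) ^ 2 := Finset.sum_le_sum fun i _ => key i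
    _ = c * ∑ j, (∑ i, |E i j|) * (x j) ^ 2 := by
        rw [← Finset.mul_sum]
        congr 1
        rw [Finset.sum_comm]
        refine Finset.sum_congr rfl fun j _ => ?_
        rw [Finset.sum_mul]
    _ ≤ c * ∑ j, c * (x j) ^ 2 := by
        refine mul_le_mul_of_nonneg_left (Finset.sum_le_sum fun j _ => ?_) hc0
        exact mul_le_mul_of_nonneg_right (colsum_le E j (hcol j)) (sq_nonneg _)
    _ = c ^ 2 * ∑ i, (x i) ^ 2 := by rw [← Finset.mul_sum, ← mul_assoc, sq]

end Stmt12Aux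
namespace Stmt12Aux
open Matrix
open scoped Matrix.Norms.L2Operator RealInnerProductSpace

lemma inner_toEucLin_left {d k : ℕ} (M : Matrix (Fin d) (Fin k) ℝ)
    (v : EuclideanSpace ℝ (Fin k)) (w : EuclideanSpace ℝ (Fin d)) :
    ⟪Matrix.toEuclideanLin M v, w⟫ = ⟪v, Matrix.toEuclideanLin Mᵀ w⟫ := by
  simpa using transpose_inner Mᵀ v w

lemma norm_orth_apply {d k : ℕ} {M : Matrix (Fin d) (Fin k) ℝ} (hM : Mᵀ * M = 1)
    (v : EuclideanSpace ℝ (Fin k)) : ‖Matrix.toEuclideanLin M v‖ = ‖v‖ := by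
  have h : ‖Matrix.toEuclideanLin M v‖ ^ 2 = ‖v‖ ^ 2 := by
    rw [← real_inner_self_eq_norm_sq, ← real_inner_self_eq_norm_sq]
    calc ⟪Matrix.toEuclideanLin M v, Matrix.toEuclideanLin M v⟫
        = ⟪v, Matrix.toEuclideanLin Mᵀ (Matrix.toEuclideanLin M v)⟫ :=
          inner_toEucLin_left M v _
      _ = ⟪v, v⟫ := by rw [← toEucLin_mul, hM, toEucLin_one]
  exact le_antisymm (le_of_sq (norm_nonneg _) (norm_nonneg _) h.le)
    (le_of_sq (norm_nonneg _) (norm_nonneg _) h.ge)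

lemma norm_orthT_apply {d k : ℕ} {M : Matrix (Fin d) (Fin k) ℝ} (hM : Mᵀ * M = 1)
    (x : EuclideanSpace ℝ (Fin d)) : ‖Matrix.toEuclideanLin Mᵀ x‖ ≤ ‖x‖ := by
  have h : ‖Matrix.toEuclideanLin Mᵀ x‖ ^ 2 ≤ ‖x‖ * ‖Matrix.toEuclideanLin Mᵀ x‖ := by
    rw [← real_inner_self_eq_norm_sq]
    calc ⟪Matrix.toEuclideanLin Mᵀ x, Matrix.toEuclideanLin Mᵀ x⟫
        = ⟪x, Matrix.toEuclideanLin M (Matrix.toEuclideanLin Mᵀ x)⟫ :=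
          transpose_inner M x _
      _ ≤ ‖x‖ * ‖Matrix.toEuclideanLin M (Matrix.toEuclideanLin Mᵀ x)‖ :=
          real_inner_le_norm _ _
      _ = ‖x‖ * ‖Matrix.toEuclideanLin Mᵀ x‖ := by rw [norm_orth_apply hM]
  rcases eq_or_lt_of_le (norm_nonneg (Matrix.toEuclideanLin Mᵀ x)) with h0 | h0
  · rw [← h0]; exact norm_nonneg x
  · nlinarith

lemma diag_norm_le {k : ℕ} (Λ : Fin k → ℝ) {b : ℝ} (hb : 0 ≤ b) (h : ∀ j, |Λ j| ≤ b)
    (v : EuclideanSpace ℝ (Fin k)) :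
    ‖Matrix.toEuclideanLin (Matrix.diagonal Λ) v‖ ≤ b * ‖v‖ := by
  refine le_of_sq (norm_nonneg _) (by positivity) ?_
  rw [euc_normsq, mul_pow, euc_normsq, Finset.mul_sum]
  refine Finset.sum_le_sum fun j _ => ?_
  rw [toEucLin_apply']
  have : ∑ j', Matrix.diagonal Λ j j' * v j' = Λ j * v j := by
    rw [Finset.sum_eq_single j]
    · simp [Matrix.diagonal]
    · intro j' _ hj'; simp [Matrix.diagonal_apply_ne' _ hj']
    · simp
  rw [this, mul_pow]
  have h2 : Λ j ^ 2 ≤ b ^ 2 := by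
    have := h j; nlinarith [abs_nonneg (Λ j), sq_abs (Λ j)]
  exact mul_le_mul_of_nonneg_right h2 (sq_nonneg _)

lemma dot_mulVec_mulVec {m k l : ℕ} (M : Matrix (Fin m) (Fin k) ℝ)
    (P : Matrix (Fin m) (Fin l) ℝ) (a : Fin k → ℝ) (b : Fin l → ℝ) :
    (M *ᵥ a) ⬝ᵥ (P *ᵥ b) = a ⬝ᵥ ((Mᵀ * P) *ᵥ b) := by
  rw [← Matrix.vecMul_transpose M a, Matrix.dotProduct_mulVec, Matrix.vecMul_vecMul,
    ← Matrix.dotProduct_mulVec]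

end Stmt12Aux
namespace Stmt12Aux
open Matrix
open scoped Matrix.Norms.L2Operator RealInnerProductSpace

lemma eig_tail_le {d r : ℕ} (Wstar N : Matrix (Fin d) (Fin d) ℝ) (hWr : Wstar.rank ≤ r)
    (Q : Matrix (Fin d) (Fin r) ℝ) (Λ : Fin r → ℝ)
    (Qp : Matrix (Fin d) (Fin (d - r)) ℝ) (Λp : Fin (d - r) → ℝ)
    (hQ : Qᵀ * Q = 1) (hQp : Qpᵀ * Qp = 1) (hQQp : Qᵀ * Qp = 0)
    (hA : Wstar + N = Q * Matrix.diagonal Λ * Qᵀ + Qp * Matrix.diagonal Λp * Qpᵀ)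
    (hdom : ∀ i j, |Λp j| ≤ |Λ i|) (j0 : Fin (d - r)) :
    |Λp j0| ≤ ‖N‖ := by
  classical
  have hQpQ : Qpᵀ * Q = 0 := by
    have := congrArg Matrix.transpose hQQp
    simpa [Matrix.transpose_mul] using this
  set e : Fin (d - r) → ℝ := Pi.single j0 1 with he
  let φ : ((Fin r → ℝ) × ℝ) →ₗ[ℝ] (Fin d → ℝ) :=
    Q.mulVecLin.comp (LinearMap.fst ℝ _ _)
      + Qp.mulVecLin.comp ((LinearMap.toSpanSingleton ℝ _ e).comp (LinearMap.snd ℝ _ _))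
  let L := Wstar.mulVecLin.comp φ
  have hrange : Module.finrank ℝ (LinearMap.range L) ≤ r :=
    le_trans (Submodule.finrank_mono (LinearMap.range_comp_le_range _ _)) hWr
  have hkerpos : 0 < Module.finrank ℝ (LinearMap.ker L) := by
    have h1 := LinearMap.finrank_range_add_finrank_ker L
    have h2 : Module.finrank ℝ ((Fin r → ℝ) × ℝ) = r + 1 := by simp
    omega
  obtain ⟨v, hv0, hvk⟩ : ∃ v : (Fin r → ℝ) × ℝ, v ≠ 0 ∧ L v = 0 := by
    have : Nontrivial (LinearMap.ker L) := Module.nontrivial_of_finrank_pos hkerpos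
    obtain ⟨⟨v, hv⟩, hne⟩ := exists_ne (0 : LinearMap.ker L)
    refine ⟨v, fun h => hne ?_, hv⟩
    exact Subtype.ext h
  obtain ⟨c, t⟩ := v
  set s : Fin (d - r) → ℝ := t • e with hs
  set xv : Fin d → ℝ := Q *ᵥ c + Qp *ᵥ s with hxv
  have hL : Wstar *ᵥ xv = 0 := by
    have : φ (c, t) = xv := by
      simp [φ, hxv, hs, Matrix.mulVecLin_apply, LinearMap.toSpanSingleton_apply,
        Matrix.mulVec_smul]
    simpa [L, this, Matrix.mulVecLin_apply] using hvk
  -- orthogonal expansion of dot products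
  have orth : ∀ (a : Fin r → ℝ) (b : Fin (d - r) → ℝ),
      (Q *ᵥ a + Qp *ᵥ b) ⬝ᵥ (Q *ᵥ a + Qp *ᵥ b) = a ⬝ᵥ a + b ⬝ᵥ b := by
    intro a b
    rw [add_dotProduct, dotProduct_add, dotProduct_add,
      dot_mulVec_mulVec Q Q, dot_mulVec_mulVec Q Qp, dot_mulVec_mulVec Qp Q,
      dot_mulVec_mulVec Qp Qp, hQ, hQQp, hQpQ, hQp]
    simp [Matrix.one_mulVec, Matrix.zero_mulVec]
  have hxx : xv ⬝ᵥ xv = c ⬝ᵥ c + s ⬝ᵥ s := orth c s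
  have hss : s ⬝ᵥ s = t * t := by
    simp only [hs, he, dotProduct, Pi.smul_apply, Pi.single_apply, smul_eq_mul]
    rw [Finset.sum_eq_single j0] <;> simp +contextual
  have hcc : 0 ≤ c ⬝ᵥ c := Finset.sum_nonneg fun i _ => mul_self_nonneg _
  have hsspos : 0 ≤ s ⬝ᵥ s := hss ▸ mul_self_nonneg t
  have hxpos : 0 < xv ⬝ᵥ xv := by
    rw [hxx]
    by_cases hc : c = 0
    · have ht : t ≠ 0 := by
        intro h; exact hv0 (by simp [Prod.ext_iff, hc, h])
      have : 0 < s ⬝ᵥ s := hss ▸ mul_self_pos.mpr ht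
      linarith
    · have : 0 < c ⬝ᵥ c :=
        hcc.lt_of_ne fun h => hc (dotProduct_self_eq_zero.mp h.symm)
      linarith
  have hQtx : Qᵀ *ᵥ xv = c := by
    rw [hxv, Matrix.mulVec_add, Matrix.mulVec_mulVec, Matrix.mulVec_mulVec, hQ, hQQp]
    simp [Matrix.one_mulVec, Matrix.zero_mulVec]
  have hQptx : Qpᵀ *ᵥ xv = s := by
    rw [hxv, Matrix.mulVec_add, Matrix.mulVec_mulVec, Matrix.mulVec_mulVec, hQpQ, hQp]
    simp [Matrix.one_mulVec, Matrix.zero_mulVec]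
  have hNx : N *ᵥ xv
      = Q *ᵥ (Matrix.diagonal Λ *ᵥ c) + Qp *ᵥ (Matrix.diagonal Λp *ᵥ s) := by
    have h1 : (Wstar + N) *ᵥ xv
        = Q *ᵥ (Matrix.diagonal Λ *ᵥ c) + Qp *ᵥ (Matrix.diagonal Λp *ᵥ s) := by
      rw [hA, Matrix.add_mulVec]
      congr 1
      · rw [Matrix.mulVec_mulVec, ← hQtx, Matrix.mulVec_mulVec]
      · rw [Matrix.mulVec_mulVec, ← hQptx, Matrix.mulVec_mulVec]
    rwa [Matrix.add_mulVec, hL, zero_add] at h1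
  -- upper bound
  have hupper : (N *ᵥ xv) ⬝ᵥ (N *ᵥ xv) ≤ ‖N‖ ^ 2 * (xv ⬝ᵥ xv) := by
    have h1 := le_opnorm N ((WithLp.equiv 2 (Fin d → ℝ)).symm xv)
    rw [toEucLin_symm] at h1
    have h2 := pow_le_pow_left₀ (norm_nonneg _) h1 2
    rwa [euc_symm_normsq, mul_pow, euc_symm_normsq] at h2
  -- lower bound
  have hlower : |Λp j0| ^ 2 * (xv ⬝ᵥ xv) ≤ (N *ᵥ xv) ⬝ᵥ (N *ᵥ xv) := by
    rw [hNx, hxx, orth]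
    have hd1 : (Matrix.diagonal Λ *ᵥ c) ⬝ᵥ (Matrix.diagonal Λ *ᵥ c)
        = ∑ i, (Λ i * c i) * (Λ i * c i) := by
      simp [dotProduct, Matrix.mulVec_diagonal]
    have hd2 : (Matrix.diagonal Λp *ᵥ s) ⬝ᵥ (Matrix.diagonal Λp *ᵥ s)
        = ∑ j, (Λp j * s j) * (Λp j * s j) := by
      simp [dotProduct, Matrix.mulVec_diagonal]
    rw [hd1, hd2, mul_add]
    have hb1 : |Λp j0| ^ 2 * (c ⬝ᵥ c) ≤ ∑ i, (Λ i * c i) * (Λ i * c i) := by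
      rw [dotProduct, Finset.mul_sum]
      refine Finset.sum_le_sum fun i _ => ?_
      have h2 : |Λp j0| ^ 2 ≤ Λ i ^ 2 := by
        have h3 := mul_self_le_mul_self (abs_nonneg (Λp j0)) (hdom i j0)
        calc |Λp j0| ^ 2 = |Λp j0| * |Λp j0| := sq _
          _ ≤ |Λ i| * |Λ i| := h3
          _ = Λ i ^ 2 := by rw [abs_mul_abs_self, sq]
      nlinarith [mul_self_nonneg (c i), h2]
    have hb2 : |Λp j0| ^ 2 * (s ⬝ᵥ s) ≤ ∑ j, (Λp j * s j) * (Λp j * s j) := by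
      rw [dotProduct, Finset.mul_sum]
      refine Finset.sum_le_sum fun j _ => ?_
      by_cases hj : j = j0
      · subst hj
        have : |Λp j| ^ 2 = Λp j * Λp j := by rw [sq_abs, sq]
        rw [this]; ring_nf; exact le_refl _
      · have : s j = 0 := by simp [hs, he, Pi.single_apply, hj]
        simp [this]
    linarith
  have hfin : |Λp j0| ^ 2 ≤ ‖N‖ ^ 2 :=
    le_of_mul_le_mul_right (hlower.trans hupper) hxpos
  exact le_of_sq (abs_nonneg _) (norm_nonneg _) hfin

end Stmt12Aux

open scoped Matrix.Norms.L2Operator RealInnerProductSpace in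
theorem stmt12 {d n r z : ℕ} (F : Matrix (Fin d) (Fin n) ℝ) (hrk : F.rank = d)
    (Wstar W : Matrix (Fin d) (Fin d) ℝ) (hWs : Wstar.IsSymm) (hWr : Wstar.rank ≤ r)
    (E : Matrix (Fin n) (Fin n) ℝ)
    (hrow : ∀ i, nnzRow E i ≤ z) (hcol : ∀ j, nnzCol E j ≤ z)
    (hW : IsTruncatedEigen r ((pinv F)ᵀ * (Fᵀ * Wstar * F + E) * pinv F) W) :
    specNorm (Wstar - W) ≤ 2 * (z : ℝ) * infNorm E / sigmaMin F ^ 2 := by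
  classical
  obtain ⟨Q, Λ, Qp, Λp, hQ, hQp, hQQp, hA, hB, hdom⟩ := hW
  rw [Stmt12Aux.specNorm_eq_l2]
  rcases Nat.eq_zero_or_pos d with hd | hd
  · subst hd
    have h0 : Wstar - W = 0 := Subsingleton.elim _ _
    rw [h0, norm_zero]
    have h1 : 0 ≤ infNorm E := Stmt12Aux.infNorm_nonneg E
    positivity
  -- invertibility of F * Fᵀ
  have hunit : IsUnit (F * Fᵀ) := by
    have h1 : (F * Fᵀ).rank = d := by rw [Matrix.rank_self_mul_transpose, hrk]
    rw [← Matrix.mulVec_surjective_iff_isUnit]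
    have h2 : LinearMap.range (F * Fᵀ).mulVecLin = ⊤ := by
      apply Submodule.eq_top_of_finrank_eq
      rw [← Matrix.rank, h1]
      simp
    intro y
    have h3 := h2 ▸ Submodule.mem_top (x := y)
    exact h3.imp fun x hx => hx
  have hdet : IsUnit (F * Fᵀ).det := (Matrix.isUnit_iff_isUnit_det _).mp hunit
  have hFG : F * pinv F = 1 := by
    rw [pinv, ← Matrix.mul_assoc]
    exact Matrix.mul_nonsing_inv _ hdet
  have hGtFt : (pinv F)ᵀ * Fᵀ = 1 := by
    rw [← Matrix.transpose_mul, hFG, Matrix.transpose_one]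
  set G := pinv F with hGdef
  set N := Gᵀ * E * G with hNdef
  have h1 : Gᵀ * (Fᵀ * Wstar * F + E) * G = Wstar + N := by
    rw [Matrix.mul_add, Matrix.add_mul]
    congr 1
    calc Gᵀ * (Fᵀ * Wstar * F) * G = (Gᵀ * Fᵀ) * Wstar * (F * G) := by
          simp only [Matrix.mul_assoc]
      _ = Wstar := by rw [hGtFt, hFG, Matrix.one_mul, Matrix.mul_one]
  have hA' : Wstar + N = Q * Matrix.diagonal Λ * Qᵀ + Qp * Matrix.diagonal Λp * Qpᵀ := by
    rw [← h1]; exact hA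
  -- sigma facts
  set σ := sigmaMin F with hσdef
  have hσinf : σ = sInf ((fun y : EuclideanSpace ℝ (Fin d) =>
      ‖Matrix.toEuclideanLin Fᵀ y‖) '' {y | ‖y‖ = 1}) := rfl
  have hbdd : BddBelow ((fun y : EuclideanSpace ℝ (Fin d) =>
      ‖Matrix.toEuclideanLin Fᵀ y‖) '' {y | ‖y‖ = 1}) := by
    refine ⟨0, ?_⟩
    rintro v ⟨y', _, rfl⟩
    exact norm_nonneg _
  have hσ_le_unit : ∀ y : EuclideanSpace ℝ (Fin d), ‖y‖ = 1 →
      σ ≤ ‖Matrix.toEuclideanLin Fᵀ y‖ := by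
    intro y hy
    rw [hσinf]
    exact csInf_le hbdd ⟨y, hy, rfl⟩
  have hinj : ∀ y : EuclideanSpace ℝ (Fin d), Matrix.toEuclideanLin Fᵀ y = 0 → y = 0 := by
    intro y hy
    have h2 : Matrix.toEuclideanLin (F * Fᵀ) y = 0 := by
      rw [Stmt12Aux.toEucLin_mul, hy, map_zero]
    have h3 : Matrix.toEuclideanLin ((F * Fᵀ)⁻¹ * (F * Fᵀ)) y = 0 := by
      rw [Stmt12Aux.toEucLin_mul, h2, map_zero]
    rwa [Matrix.nonsing_inv_mul _ hdet, Stmt12Aux.toEucLin_one] at h3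
  have hσpos : 0 < σ := by
    haveI hne : Nonempty (Fin d) := ⟨⟨0, hd⟩⟩
    haveI : Nontrivial (EuclideanSpace ℝ (Fin d)) := by infer_instance
    obtain ⟨x0, hx0⟩ := exists_norm_eq (EuclideanSpace ℝ (Fin d)) zero_le_one
    have hsph : {y : EuclideanSpace ℝ (Fin d) | ‖y‖ = 1} = Metric.sphere 0 1 := by
      ext y; simp [mem_sphere_zero_iff_norm]
    have hcont : Continuous fun y : EuclideanSpace ℝ (Fin d) =>
        ‖Matrix.toEuclideanLin Fᵀ y‖ :=
      (LinearMap.continuous_of_finiteDimensional _).norm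
    have hc : IsCompact ((fun y : EuclideanSpace ℝ (Fin d) =>
        ‖Matrix.toEuclideanLin Fᵀ y‖) '' {y | ‖y‖ = 1}) := by
      rw [hsph]
      exact (isCompact_sphere _ _).image hcont
    obtain ⟨y0, hy0, hy0f⟩ := hc.sInf_mem ⟨_, ⟨x0, hx0, rfl⟩⟩
    rw [hσinf, ← hy0f]
    have hne0 : Matrix.toEuclideanLin Fᵀ y0 ≠ 0 := by
      intro h
      have := hinj y0 h
      rw [this] at hy0
      simp at hy0
    exact norm_pos_iff.mpr hne0
  have hσ_le : ∀ u : EuclideanSpace ℝ (Fin d),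
      σ * ‖u‖ ≤ ‖Matrix.toEuclideanLin Fᵀ u‖ := by
    intro u
    by_cases hu : u = 0
    · simp [hu]
    · have hnu : 0 < ‖u‖ := norm_pos_iff.mpr hu
      have hy1 : ‖(‖u‖⁻¹ • u : EuclideanSpace ℝ (Fin d))‖ = 1 := by
        rw [norm_smul, Real.norm_eq_abs, abs_of_nonneg (inv_nonneg.mpr hnu.le)]
        field_simp
      have h2 := hσ_le_unit _ hy1
      have h2' : Matrix.toEuclideanLin Fᵀ (‖u‖⁻¹ • u)
          = ‖u‖⁻¹ • Matrix.toEuclideanLin Fᵀ u := LinearMap.map_smul _ _ _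
      rw [h2', norm_smul, Real.norm_eq_abs, abs_of_nonneg (inv_nonneg.mpr hnu.le)] at h2
      calc σ * ‖u‖ ≤ (‖u‖⁻¹ * ‖Matrix.toEuclideanLin Fᵀ u‖) * ‖u‖ :=
            mul_le_mul_of_nonneg_right h2 hnu.le
        _ = ‖Matrix.toEuclideanLin Fᵀ u‖ := by field_simp
  -- pinv norm bound
  have hG : ∀ x : EuclideanSpace ℝ (Fin d), ‖Matrix.toEuclideanLin G x‖ ≤ σ⁻¹ * ‖x‖ := by
    intro x
    set u : EuclideanSpace ℝ (Fin d) := Matrix.toEuclideanLin (F * Fᵀ)⁻¹ x with hu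
    have hGx : Matrix.toEuclideanLin G x = Matrix.toEuclideanLin Fᵀ u := by
      have hGeq : G = Fᵀ * (F * Fᵀ)⁻¹ := rfl
      rw [hGeq, Stmt12Aux.toEucLin_mul]
    have hFGx : Matrix.toEuclideanLin F (Matrix.toEuclideanLin G x) = x := by
      rw [← Stmt12Aux.toEucLin_mul, hFG, Stmt12Aux.toEucLin_one]
    have hsq : ‖Matrix.toEuclideanLin G x‖ ^ 2 = ⟪u, x⟫ := by
      rw [← real_inner_self_eq_norm_sq, hGx, Stmt12Aux.transpose_inner, ← hGx, hFGx]
    have hub : ⟪u, x⟫ ≤ ‖u‖ * ‖x‖ := real_inner_le_norm u x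
    have hσu : σ * ‖u‖ ≤ ‖Matrix.toEuclideanLin G x‖ := hGx ▸ hσ_le u
    rcases eq_or_lt_of_le (norm_nonneg (Matrix.toEuclideanLin G x)) with h0 | h0
    · rw [← h0]
      positivity
    · rw [le_inv_mul_iff₀ hσpos]
      nlinarith [mul_le_mul_of_nonneg_right hσu (norm_nonneg (Matrix.toEuclideanLin G x)),
        norm_nonneg u, norm_nonneg x]
  have hGn : ‖G‖ ≤ σ⁻¹ := Stmt12Aux.opnorm_le _ (inv_nonneg.mpr hσpos.le) hG
  have hGtn : ‖Gᵀ‖ ≤ σ⁻¹ := by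
    have hGh : Gᵀ = Gᴴ := by ext i j; simp
    rw [hGh, Matrix.l2_opNorm_conjTranspose]
    exact hGn
  have hEn : ‖E‖ ≤ (z : ℝ) * infNorm E := Stmt12Aux.specNorm_sparse E hrow hcol
  have hE0 : 0 ≤ (z : ℝ) * infNorm E :=
    mul_nonneg (Nat.cast_nonneg z) (Stmt12Aux.infNorm_nonneg E)
  have hNn : ‖N‖ ≤ σ⁻¹ * ((z : ℝ) * infNorm E) * σ⁻¹ := by
    calc ‖N‖ = ‖Gᵀ * E * G‖ := by rw [hNdef]
      _ ≤ ‖Gᵀ * E‖ * ‖G‖ := Matrix.l2_opNorm_mul _ _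
      _ ≤ ‖Gᵀ‖ * ‖E‖ * ‖G‖ :=
          mul_le_mul_of_nonneg_right (Matrix.l2_opNorm_mul _ _) (norm_nonneg _)
      _ ≤ σ⁻¹ * ((z : ℝ) * infNorm E) * σ⁻¹ := by
          have h2 : ‖Gᵀ‖ * ‖E‖ ≤ σ⁻¹ * ((z : ℝ) * infNorm E) :=
            mul_le_mul hGtn hEn (norm_nonneg _) (inv_nonneg.mpr hσpos.le)
          exact mul_le_mul h2 hGn (norm_nonneg _)
            (mul_nonneg (inv_nonneg.mpr hσpos.le) hE0)
  have key : ∀ j : Fin (d - r), |Λp j| ≤ ‖N‖ := fun j =>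
    Stmt12Aux.eig_tail_le Wstar N hWr Q Λ Qp Λp hQ hQp hQQp hA' hdom j
  have htail : ‖Qp * Matrix.diagonal Λp * Qpᵀ‖ ≤ ‖N‖ := by
    refine Stmt12Aux.opnorm_le _ (norm_nonneg N) fun x => ?_
    rw [Stmt12Aux.toEucLin_mul, Stmt12Aux.toEucLin_mul, Stmt12Aux.norm_orth_apply hQp]
    calc ‖Matrix.toEuclideanLin (Matrix.diagonal Λp) (Matrix.toEuclideanLin Qpᵀ x)‖
        ≤ ‖N‖ * ‖Matrix.toEuclideanLin Qpᵀ x‖ :=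
          Stmt12Aux.diag_norm_le Λp (norm_nonneg N) key _
      _ ≤ ‖N‖ * ‖x‖ :=
          mul_le_mul_of_nonneg_left (Stmt12Aux.norm_orthT_apply hQp x) (norm_nonneg N)
  have hWdiff : Wstar - W = Qp * Matrix.diagonal Λp * Qpᵀ - N := by
    have h2 : Wstar - W = (Wstar + N) - N - (Q * Matrix.diagonal Λ * Qᵀ) := by
      rw [hB]; abel
    rw [h2, hA']; abel
  calc ‖Wstar - W‖ = ‖Qp * Matrix.diagonal Λp * Qpᵀ - N‖ := by rw [hWdiff]
    _ ≤ ‖Qp * Matrix.diagonal Λp * Qpᵀ‖ + ‖N‖ := norm_sub_le _ _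
    _ ≤ ‖N‖ + ‖N‖ := add_le_add_left htail _
    _ ≤ 2 * (σ⁻¹ * ((z : ℝ) * infNorm E) * σ⁻¹) := by linarith
    _ = 2 * (z : ℝ) * infNorm E / σ ^ 2 := by
        field_simp
end
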